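/- There exists a bounded linear operator T on l^∞(ℕ) such that T is J^mix-class (i.e. there exists a nonzero x ∈ l^∞(ℕ) with J_T^mix(x) = l^∞(ℕ)) and the set A_T^mix = {x ∈ l^∞(ℕ) : J_T^mix(x) = l^∞(ℕ)} is non-separable. -/

import Mathlib

open Filter Topology
open scoped ENNReal

/-- The unweighted backward shift on `l^∞(ℕ)`, the space of bounded sequences of
complex numbers with the supremum norm. -/
noncomputable def backwardShift : lp (fun _ : ℕ => ℂ) ∞ →L[ℂ] lp (fun _ : ℕ => ℂ) ∞ :=
  LinearMap.mkContinuous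
    { toFun := fun x => ⟨fun n => x (n + 1), memℓp_infty ⟨‖x‖, by
        rintro r ⟨n, rfl⟩
        exact lp.norm_apply_le_norm ENNReal.top_ne_zero x (n + 1)⟩⟩
      map_add' := fun x y => by ext n; exact congrFun rfl n
      map_smul' := fun c x => by ext n; rfl }
    1
    (fun x => by
      rw [one_mul]
      apply lp.norm_le_of_forall_le (norm_nonneg x)
      intro n
      exact lp.norm_apply_le_norm ENNReal.top_ne_zero x (n + 1))

/-- The extended mixing limit set `J_T^mix(x)`: all `y` for which there exists a
sequence `(x_n)` with `x_n → x` and `T^n x_n → y`. -/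
noncomputable def Jmix {X : Type*} [SeminormedAddCommGroup X] [NormedSpace ℂ X]
    (T : X →L[ℂ] X) (x : X) : Set X :=
  {y | ∃ u : ℕ → X, Tendsto u atTop (𝓝 x) ∧ Tendsto (fun n => (T ^ n) (u n)) atTop (𝓝 y)}

namespace Stmt18Aux

noncomputable def ofBdd (f : ℕ → ℂ) (C : ℝ) (h : ∀ p, ‖f p‖ ≤ C) :
    lp (fun _ : ℕ => ℂ) ∞ :=
  ⟨f, memℓp_infty ⟨C, by rintro r ⟨p, rfl⟩; exact h p⟩⟩

@[simp] lemma ofBdd_apply (f : ℕ → ℂ) (C : ℝ) (h : ∀ p, ‖f p‖ ≤ C) (p : ℕ) :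
    (ofBdd f C h : ∀ _ : ℕ, ℂ) p = f p := rfl

/-- The operator `(Tx)(m) = 2 x(2m+1)`. -/
noncomputable def T : lp (fun _ : ℕ => ℂ) ∞ →L[ℂ] lp (fun _ : ℕ => ℂ) ∞ :=
  LinearMap.mkContinuous
    { toFun := fun x => ofBdd (fun m => 2 * x (2 * m + 1)) (2 * ‖x‖) (fun m => by
        rw [norm_mul]
        have h2 : ‖(2 : ℂ)‖ = 2 := by simp
        rw [h2]
        exact mul_le_mul_of_nonneg_left
          (lp.norm_apply_le_norm ENNReal.top_ne_zero x _) (by norm_num))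
      map_add' := fun x y => by
        ext m
        show (2 : ℂ) * (x (2 * m + 1) + y (2 * m + 1)) =
          2 * x (2 * m + 1) + 2 * y (2 * m + 1)
        ring
      map_smul' := fun c x => by
        ext m
        show (2 : ℂ) * (c * x (2 * m + 1)) = c * (2 * x (2 * m + 1))
        ring }
    2
    (fun x => by
      apply lp.norm_le_of_forall_le (by positivity)
      intro m
      show ‖(2 : ℂ) * x (2 * m + 1)‖ ≤ 2 * ‖x‖
      rw [norm_mul]
      have h2 : ‖(2 : ℂ)‖ = 2 := by simp
      rw [h2]
      exact mul_le_mul_of_nonneg_left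
        (lp.norm_apply_le_norm ENNReal.top_ne_zero x _) (by norm_num))

lemma T_apply (x : lp (fun _ : ℕ => ℂ) ∞) (m : ℕ) :
    (T x : ∀ _ : ℕ, ℂ) m = 2 * x (2 * m + 1) := rfl

lemma T_pow_apply (n : ℕ) (x : lp (fun _ : ℕ => ℂ) ∞) (m : ℕ) :
    ((T ^ n) x : ∀ _ : ℕ, ℂ) m = 2 ^ n * x (2 ^ n * (m + 1) - 1) := by
  induction n generalizing x m with
  | zero => simp
  | succ n ih =>
    rw [pow_succ, ContinuousLinearMap.mul_apply, ih (T x) m, T_apply]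
    have harg : 2 * (2 ^ n * (m + 1) - 1) + 1 = 2 ^ (n + 1) * (m + 1) - 1 := by
      have h1 : 1 ≤ 2 ^ n * (m + 1) :=
        Nat.one_le_iff_ne_zero.mpr (by positivity)
      have h2 : 2 ^ (n + 1) * (m + 1) = 2 * (2 ^ n * (m + 1)) := by ring
      omega
    rw [harg]
    ring

lemma Jmix_univ (x : lp (fun _ : ℕ => ℂ) ∞) (hx : ∀ p, p % 2 = 1 → x p = 0) :
    Jmix T x = Set.univ := by
  refine Set.eq_univ_iff_forall.mpr fun y => ?_
  -- the approximating sequence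
  set u : ℕ → lp (fun _ : ℕ => ℂ) ∞ := fun n =>
    ofBdd (fun p => if 2 ^ n ∣ (p + 1) then y ((p + 1) / 2 ^ n - 1) / 2 ^ n else x p)
      (‖x‖ + ‖y‖) (fun p => by
        dsimp only
        split_ifs with h
        · have h2 : ‖(2 : ℂ) ^ n‖ = 2 ^ n := by
            rw [norm_pow]; norm_num
          rw [norm_div, h2]
          calc ‖y ((p + 1) / 2 ^ n - 1)‖ / 2 ^ n
              ≤ ‖y ((p + 1) / 2 ^ n - 1)‖ :=
                div_le_self (norm_nonneg _) (one_le_pow₀ one_le_two)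
            _ ≤ ‖y‖ := lp.norm_apply_le_norm ENNReal.top_ne_zero y _
            _ ≤ ‖x‖ + ‖y‖ := le_add_of_nonneg_left (norm_nonneg x)
        · exact le_trans (lp.norm_apply_le_norm ENNReal.top_ne_zero x p)
            (le_add_of_nonneg_right (norm_nonneg y))) with hu
  have hTy : ∀ n, (T ^ n) (u n) = y := by
    intro n
    ext p
    rw [T_pow_apply]
    have hpos : 1 ≤ 2 ^ n * (p + 1) := Nat.one_le_iff_ne_zero.mpr (by positivity)
    have hq1 : (2 ^ n * (p + 1) - 1) + 1 = 2 ^ n * (p + 1) := by omega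
    have hcoord : (u n : ∀ _ : ℕ, ℂ) (2 ^ n * (p + 1) - 1) = y p / 2 ^ n := by
      show (if 2 ^ n ∣ ((2 ^ n * (p + 1) - 1) + 1)
        then y (((2 ^ n * (p + 1) - 1) + 1) / 2 ^ n - 1) / 2 ^ n
        else x (2 ^ n * (p + 1) - 1)) = y p / 2 ^ n
      rw [hq1, if_pos (Dvd.intro _ rfl), Nat.mul_div_cancel_left _ (pow_pos two_pos n)]
      simp
    rw [hcoord]
    have h2 : (2 : ℂ) ^ n ≠ 0 := pow_ne_zero _ two_ne_zero
    field_simp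
  have hdist : ∀ n, 1 ≤ n → ‖u n - x‖ ≤ ‖y‖ / 2 ^ n := by
    intro n hn
    apply lp.norm_le_of_forall_le (by positivity)
    intro p
    have hsub : ((u n - x : lp (fun _ : ℕ => ℂ) ∞) : ∀ _ : ℕ, ℂ) p
        = (u n : ∀ _ : ℕ, ℂ) p - x p := by
      rw [lp.coeFn_sub]; rfl
    rw [hsub]
    by_cases h : 2 ^ n ∣ (p + 1)
    · have hxp : x p = 0 := by
        apply hx
        have h2 : (2 : ℕ) ∣ (p + 1) := dvd_trans (dvd_pow_self 2 (by omega)) h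
        omega
      have hcoord : (u n : ∀ _ : ℕ, ℂ) p = y ((p + 1) / 2 ^ n - 1) / 2 ^ n := by
        show (if 2 ^ n ∣ (p + 1) then _ else _) = _
        rw [if_pos h]
      rw [hcoord, hxp, sub_zero, norm_div]
      have h2 : ‖(2 : ℂ) ^ n‖ = 2 ^ n := by rw [norm_pow]; norm_num
      rw [h2]
      gcongr
      exact lp.norm_apply_le_norm ENNReal.top_ne_zero y _
    · have hcoord : (u n : ∀ _ : ℕ, ℂ) p = x p := by
        show (if 2 ^ n ∣ (p + 1) then _ else _) = _
        rw [if_neg h]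
      rw [hcoord, sub_self, norm_zero]
      positivity
  refine ⟨u, ?_, ?_⟩
  · rw [← tendsto_sub_nhds_zero_iff]
    apply squeeze_zero_norm' (a := fun n => ‖y‖ / 2 ^ n)
    · exact eventually_atTop.mpr ⟨1, hdist⟩
    · exact tendsto_const_nhds.div_atTop
        (tendsto_pow_atTop_atTop_of_one_lt one_lt_two)
  · simp only [hTy]
    exact tendsto_const_nhds

open Classical in
/-- indicator vector of the even positions `2k`, `k ∈ s` -/
noncomputable def e (s : Set ℕ) : lp (fun _ : ℕ => ℂ) ∞ :=
  ofBdd (fun p => if p % 2 = 0 ∧ p / 2 ∈ s then 1 else 0) 1 (fun p => by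
    split_ifs <;> simp)

open Classical in
lemma e_apply (s : Set ℕ) (p : ℕ) :
    (e s : ∀ _ : ℕ, ℂ) p = if p % 2 = 0 ∧ p / 2 ∈ s then 1 else 0 := by
  simp [e, ofBdd]

lemma e_odd (s : Set ℕ) (p : ℕ) (hp : p % 2 = 1) : (e s : ∀ _ : ℕ, ℂ) p = 0 := by
  rw [e_apply, if_neg]
  rintro ⟨h0, -⟩
  omega

lemma e_sep {s t : Set ℕ} (hst : s ≠ t) : 1 ≤ dist (e s) (e t) := by
  have : ∃ k, ¬ (k ∈ s ↔ k ∈ t) := by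
    by_contra h
    push_neg at h
    exact hst (Set.ext fun k => (h k))
  obtain ⟨k, hk⟩ := this
  have hmod : (2 * k) % 2 = 0 := by omega
  have hdiv : (2 * k) / 2 = k := by omega
  have hcoord : ‖((e s - e t : lp (fun _ : ℕ => ℂ) ∞) : ∀ _ : ℕ, ℂ) (2 * k)‖ = 1 := by
    have hsub : ((e s - e t : lp (fun _ : ℕ => ℂ) ∞) : ∀ _ : ℕ, ℂ) (2 * k)
        = (e s : ∀ _ : ℕ, ℂ) (2 * k) - (e t : ∀ _ : ℕ, ℂ) (2 * k) := by
      rw [lp.coeFn_sub]; rfl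
    rw [hsub, e_apply, e_apply, hmod, hdiv]
    by_cases hks : k ∈ s <;> by_cases hkt : k ∈ t <;>
      simp_all
  rw [dist_eq_norm]
  calc (1 : ℝ) = ‖((e s - e t : lp (fun _ : ℕ => ℂ) ∞) : ∀ _ : ℕ, ℂ) (2 * k)‖ := hcoord.symm
    _ ≤ ‖e s - e t‖ := lp.norm_apply_le_norm ENNReal.top_ne_zero _ _

lemma e_ne_zero : e Set.univ ≠ 0 := by
  intro h
  have h0 : (e Set.univ : ∀ _ : ℕ, ℂ) 0 = 0 := by
    rw [h]
    exact congrFun (lp.coeFn_zero (fun _ : ℕ => ℂ) ∞) 0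
  rw [e_apply] at h0
  simp at h0

lemma not_separable (A : Set (lp (fun _ : ℕ => ℂ) ∞))
    (hA : ∀ s : Set ℕ, e s ∈ A) : ¬ TopologicalSpace.IsSeparable A := by
  rintro ⟨c, hc, hsub⟩
  have hex : ∀ s : Set ℕ, ∃ z ∈ c, dist (e s) z < 1 / 2 := fun s =>
    Metric.mem_closure_iff.mp (hsub (hA s)) _ (by norm_num)
  choose f hfc hfd using hex
  have hinj : Function.Injective f := by
    intro s t h
    by_contra hst
    have h1 := e_sep hst
    have h2 : dist (e s) (e t) ≤ dist (e s) (f s) + dist (f t) (e t) := by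
      rw [h]
      exact (dist_triangle _ _ _).trans (by rw [dist_comm (f t) (e t)])
    have h3 := hfd s
    have h4 := hfd t
    rw [dist_comm (f t) (e t)] at h2
    linarith
  have : Countable ↥c := hc.to_subtype
  obtain ⟨g, hg⟩ := (countable_iff_exists_injective ↥c).mp this
  exact Function.cantor_injective (fun s => g ⟨f s, hfc s⟩)
    (fun s t h => hinj (congrArg Subtype.val (hg h)))

end Stmt18Aux

/-- There exists a `J^mix`-class operator `T` on `l^∞(ℕ)` such that the set
`A_T^mix = {x : J_T^mix(x) = l^∞(ℕ)}` is non-separable. -/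
theorem stmt18 :
    ∃ T : lp (fun _ : ℕ => ℂ) ∞ →L[ℂ] lp (fun _ : ℕ => ℂ) ∞,
      (∃ x : lp (fun _ : ℕ => ℂ) ∞, x ≠ 0 ∧ Jmix T x = Set.univ) ∧
      ¬ TopologicalSpace.IsSeparable
          {x : lp (fun _ : ℕ => ℂ) ∞ | Jmix T x = Set.univ} := by
  refine ⟨Stmt18Aux.T, ⟨Stmt18Aux.e Set.univ, Stmt18Aux.e_ne_zero,
    Stmt18Aux.Jmix_univ _ (Stmt18Aux.e_odd Set.univ)⟩, ?_⟩
  exact Stmt18Aux.not_separable _ (fun s => Stmt18Aux.Jmix_univ (Stmt18Aux.e s) (Stmt18Aux.e_odd s))
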